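/- Let (ρ_k^{(m)}) be the public-belief precision of the m-agent word-of-mouth social learning model, satisfying ρ_k = ρ_{k-1} + 1/(λ_e + Σ_{i=1}^{m−1} γ^{(i)}(ρ_{k-1})) with γ^{(j)} defined recursively by γ^{(1)}(ρ) = λ_w^{(1)}(1 + λ_e ρ)² and γ^{(j)}(ρ) = λ_w^{(j)}(1 + ρ(λ_e + Σ_{i<j} γ^{(i)}(ρ)))², where all λ's are positive and ρ_0 > 0. Then ρ_k / k^{1/(2^m − 1)} → ((2^m − 1) / (λ_e^{2^{m−1}} ∏_{i=1}^{m−1} (λ_w^{(i)})^{2^{m−1−i}}))^{1/(2^m − 1)} as k → ∞. -/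

import Mathlib

open Filter Finset
open Topology

/-- `m`-agent word-of-mouth social learning: the public-belief precision satisfies
`ρ_k / k^{1/(2^m − 1)} → ((2^m − 1)/(λ_e^{2^{m−1}} ∏_{i=1}^{m−1} (λ_w⁽ⁱ⁾)^{2^{m−1−i}}))^{1/(2^m − 1)}`. -/
theorem m_agent_precision_rate
    (m : ℕ) (hm : 2 ≤ m)
    (lam_e : ℝ) (lam_w : ℕ → ℝ) (hle : 0 < lam_e) (hlw : ∀ i, 0 < lam_w i)
    (γ : ℕ → ℝ → ℝ)
    (hγ : ∀ j : ℕ, 1 ≤ j → ∀ ρ : ℝ,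
      γ j ρ = lam_w j * (1 + ρ * (lam_e + ∑ i ∈ Finset.Icc 1 (j - 1), γ i ρ)) ^ 2)
    (ρ : ℕ → ℝ) (hρpos : ∀ k, 0 < ρ k)
    (hrec : ∀ k : ℕ, ρ (k + 1) = ρ k
      + 1 / (lam_e + ∑ i ∈ Finset.Icc 1 (m - 1), γ i (ρ k))) :
    Tendsto (fun k : ℕ => ρ k / (k : ℝ) ^ ((1 : ℝ) / (2 ^ m - 1))) atTop
      (nhds (((2 ^ m - 1 : ℝ)
        / (lam_e ^ (2 ^ (m - 1)) * ∏ i ∈ Finset.Icc 1 (m - 1), lam_w i ^ (2 ^ (m - 1 - i))))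
          ^ ((1 : ℝ) / (2 ^ m - 1)))) := by
  obtain ⟨n, rfl⟩ : ∃ n, m = n + 1 := ⟨m - 1, by omega⟩
  -- nonnegativity of γ
  have hγnn : ∀ j : ℕ, 1 ≤ j → ∀ x : ℝ, 0 ≤ γ j x := by
    intro j hj x
    rw [hγ j hj x]
    exact mul_nonneg (hlw j).le (sq_nonneg _)
  -- monotonicity of γ on nonnegative reals
  have hγmono : ∀ j : ℕ, 1 ≤ j → ∀ x y : ℝ, 0 ≤ x → x ≤ y → γ j x ≤ γ j y := by
    intro j
    induction j using Nat.strong_induction_on with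
    | _ j ih =>
      intro hj x y hx hxy
      · rw [hγ j hj x, hγ j hj y]
        have hsum_nn : 0 ≤ ∑ i ∈ Finset.Icc 1 (j - 1), γ i x :=
          Finset.sum_nonneg fun i hi => hγnn i (Finset.mem_Icc.mp hi).1 x
        have hsle : (∑ i ∈ Finset.Icc 1 (j - 1), γ i x)
            ≤ ∑ i ∈ Finset.Icc 1 (j - 1), γ i y := by
          refine Finset.sum_le_sum fun i hi => ?_
          exact ih i (by have := (Finset.mem_Icc.mp hi).2; omega) (Finset.mem_Icc.mp hi).1 x y hx hxy
        have hA : (0:ℝ) ≤ lam_e + ∑ i ∈ Finset.Icc 1 (j - 1), γ i x := by linarith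
        have hinner : 1 + x * (lam_e + ∑ i ∈ Finset.Icc 1 (j - 1), γ i x)
            ≤ 1 + y * (lam_e + ∑ i ∈ Finset.Icc 1 (j - 1), γ i y) := by
          have := mul_le_mul hxy (by linarith : (lam_e + ∑ i ∈ Finset.Icc 1 (j - 1), γ i x)
            ≤ lam_e + ∑ i ∈ Finset.Icc 1 (j - 1), γ i y) hA (le_trans hx hxy)
          linarith
        have h0 : (0:ℝ) ≤ 1 + x * (lam_e + ∑ i ∈ Finset.Icc 1 (j - 1), γ i x) := by
          have := mul_nonneg hx hA; linarith
        exact mul_le_mul_of_nonneg_left (pow_le_pow_left₀ h0 hinner 2) (hlw j).le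
  -- asymptotics of the partial sums of γ
  have key : ∀ j : ℕ,
      Tendsto (fun x : ℝ => (lam_e + ∑ i ∈ Finset.Icc 1 j, γ i x) / x ^ (2 ^ (j + 1) - 2))
        atTop (𝓝 (lam_e ^ (2 ^ j) * ∏ i ∈ Finset.Icc 1 j, lam_w i ^ (2 ^ (j - i)))) := by
    intro j
    induction j with
    | zero => simpa using tendsto_const_nhds
    | succ j ih =>
      set e := 2 ^ (j + 1) - 2 with he
      have hee : 2 ^ (j + 1 + 1) - 2 = 2 * e + 2 := by
        have h2 : (2:ℕ) ^ (j + 1 + 1) = 2 * 2 ^ (j + 1) := by ring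
        have h3 : (2:ℕ) ≤ 2 ^ (j + 1) := by
          calc (2:ℕ) = 2 ^ 1 := rfl
          _ ≤ 2 ^ (j + 1) := Nat.pow_le_pow_right (by norm_num) (by omega)
        omega
      set Sj : ℝ → ℝ := fun x => lam_e + ∑ i ∈ Finset.Icc 1 j, γ i x with hSj
      set Cj : ℝ := lam_e ^ (2 ^ j) * ∏ i ∈ Finset.Icc 1 j, lam_w i ^ (2 ^ (j - i)) with hCj
      -- constant identity
      have hCsucc : lam_e ^ (2 ^ (j + 1)) * ∏ i ∈ Finset.Icc 1 (j + 1), lam_w i ^ (2 ^ (j + 1 - i))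
          = lam_w (j + 1) * Cj ^ 2 := by
        rw [Finset.prod_Icc_succ_top (by omega : 1 ≤ j + 1)]
        have h1 : ∏ i ∈ Finset.Icc 1 j, lam_w i ^ (2 ^ (j + 1 - i))
            = (∏ i ∈ Finset.Icc 1 j, lam_w i ^ (2 ^ (j - i))) ^ 2 := by
          rw [← Finset.prod_pow]
          refine Finset.prod_congr rfl fun i hi => ?_
          have hij : i ≤ j := (Finset.mem_Icc.mp hi).2
          rw [← pow_mul]
          congr 1
          have h4 : j + 1 - i = (j - i) + 1 := by omega
          rw [h4, pow_succ]
        rw [h1]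
        have h5 : (2:ℕ) ^ (j + 1) = 2 ^ j * 2 := pow_succ 2 j
        rw [h5, pow_mul]
        have h6 : j + 1 - (j + 1) = 0 := by omega
        rw [h6, pow_zero, pow_one, hCj]
        ring
      -- limits of auxiliary functions
      have h0a : Tendsto (fun x : ℝ => 1 / x ^ (e + 2)) atTop (𝓝 0) := by
        exact Tendsto.div_atTop tendsto_const_nhds (tendsto_pow_atTop (by omega))
      have h0b : Tendsto (fun x : ℝ => 1 / x ^ (e + 1)) atTop (𝓝 0) := by
        exact Tendsto.div_atTop tendsto_const_nhds (tendsto_pow_atTop (by omega))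
      have hg : Tendsto (fun x : ℝ => (Sj x / x ^ e) * (1 / x ^ (e + 2))
          + lam_w (j + 1) * (1 / x ^ (e + 1) + Sj x / x ^ e) ^ 2) atTop
          (𝓝 (Cj * 0 + lam_w (j + 1) * (0 + Cj) ^ 2)) := by
        exact (ih.mul h0a).add (tendsto_const_nhds.mul ((h0b.add ih).pow 2))
      rw [show Cj * 0 + lam_w (j + 1) * (0 + Cj) ^ 2 = lam_w (j + 1) * Cj ^ 2 by ring] at hg
      rw [hCsucc]
      refine hg.congr' ?_
      filter_upwards [eventually_gt_atTop (0:ℝ)] with x hx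
      rw [Finset.sum_Icc_succ_top (by omega : 1 ≤ j + 1),
        hγ (j + 1) (by omega) x, hee]
      have hxne : x ≠ 0 := ne_of_gt hx
      simp only [Nat.add_sub_cancel, ← hSj]
      field_simp
      ring
  -- abbreviations
  simp only [Nat.add_sub_cancel] at hrec ⊢
  set S : ℝ → ℝ := fun x => lam_e + ∑ i ∈ Finset.Icc 1 n, γ i x with hS
  have hSle : ∀ x, lam_e ≤ S x := by
    intro x
    have : 0 ≤ ∑ i ∈ Finset.Icc 1 n, γ i x :=
      Finset.sum_nonneg fun i hi => hγnn i (Finset.mem_Icc.mp hi).1 x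
    simp only [hS]; linarith
  have hSpos : ∀ x, 0 < S x := fun x => lt_of_lt_of_le hle (hSle x)
  have hSmono : ∀ x y : ℝ, 0 ≤ x → x ≤ y → S x ≤ S y := by
    intro x y hx hxy
    simp only [hS]
    have : (∑ i ∈ Finset.Icc 1 n, γ i x) ≤ ∑ i ∈ Finset.Icc 1 n, γ i y :=
      Finset.sum_le_sum fun i hi => hγmono i (Finset.mem_Icc.mp hi).1 x y hx hxy
    linarith
  have hrec' : ∀ k, ρ (k + 1) = ρ k + 1 / S (ρ k) := hrec
  -- ρ is monotone and tends to infinity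
  have hρmono : Monotone ρ := by
    apply monotone_nat_of_le_succ
    intro k
    rw [hrec' k]
    have := hSpos (ρ k)
    have : 0 < 1 / S (ρ k) := by positivity
    linarith
  have hρtop : Tendsto ρ atTop atTop := by
    rcases tendsto_of_monotone hρmono with h | ⟨l, hl⟩
    · exact h
    · exfalso
      have hub : ∀ k, ρ k ≤ l := fun k => hρmono.ge_of_tendsto hl k
      have hδ : 0 < 1 / S l := by have := hSpos l; positivity
      have hdiff : Tendsto (fun k => ρ (k + 1) - ρ k) atTop (𝓝 (l - l)) :=
        (hl.comp (tendsto_add_atTop_nat 1)).sub hl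
      rw [sub_self] at hdiff
      have hge : ∀ k, 1 / S l ≤ ρ (k + 1) - ρ k := by
        intro k
        rw [hrec' k]
        have h1 : S (ρ k) ≤ S l := hSmono _ _ (hρpos k).le (hub k)
        have h2 : 1 / S l ≤ 1 / S (ρ k) :=
          one_div_le_one_div_of_le (hSpos (ρ k)) h1
        linarith
      have := ge_of_tendsto' hdiff hge
      linarith
  -- the constants
  set N : ℕ := 2 ^ (n + 1) - 1 with hN
  set e : ℕ := 2 ^ (n + 1) - 2 with hedef
  have h2pow : (2:ℕ) ≤ 2 ^ (n + 1) := by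
    calc (2:ℕ) = 2 ^ 1 := rfl
    _ ≤ 2 ^ (n + 1) := Nat.pow_le_pow_right (by norm_num) (by omega)
  have hNe : N = e + 1 := by omega
  have hN0 : N ≠ 0 := by omega
  set c : ℝ := lam_e ^ (2 ^ n) * ∏ i ∈ Finset.Icc 1 n, lam_w i ^ (2 ^ (n - i)) with hc
  have hcpos : 0 < c := by
    apply mul_pos (pow_pos hle _)
    exact Finset.prod_pos fun i _ => pow_pos (hlw i) _
  -- limit of S(ρ k)/ρ k ^ e
  have hL3 : Tendsto (fun k => S (ρ k) / ρ k ^ e) atTop (𝓝 c) := (key n).comp hρtop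
  have hL4 : Tendsto (fun k => ρ k ^ e / S (ρ k)) atTop (𝓝 c⁻¹) := by
    simpa [inv_div] using hL3.inv₀ (ne_of_gt hcpos)
  -- ratio of consecutive terms tends to 1
  have ht0 : Tendsto (fun k => (1 / S (ρ k)) / ρ k) atTop (𝓝 0) := by
    have hup : Tendsto (fun k => (1 / lam_e) * (ρ k)⁻¹) atTop (𝓝 ((1 / lam_e) * 0)) :=
      tendsto_const_nhds.mul hρtop.inv_tendsto_atTop
    rw [mul_zero] at hup
    refine tendsto_of_tendsto_of_tendsto_of_le_of_le tendsto_const_nhds hup ?_ ?_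
    · intro k
      have := hSpos (ρ k); have := hρpos k
      positivity
    · intro k
      have h1 : 1 / S (ρ k) ≤ 1 / lam_e := one_div_le_one_div_of_le hle (hSle (ρ k))
      have h2 : 0 ≤ (ρ k)⁻¹ := by have := hρpos k; positivity
      calc (1 / S (ρ k)) / ρ k = (1 / S (ρ k)) * (ρ k)⁻¹ := by rw [div_eq_mul_inv]
      _ ≤ (1 / lam_e) * (ρ k)⁻¹ := by
          apply mul_le_mul_of_nonneg_right h1 h2
  have hr : Tendsto (fun k => ρ (k + 1) / ρ k) atTop (𝓝 1) := by
    have := (tendsto_const_nhds : Tendsto (fun _ : ℕ => (1:ℝ)) atTop (𝓝 1)).add ht0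
    rw [add_zero] at this
    refine this.congr fun k => ?_
    rw [hrec' k]
    have h1 := (hρpos k).ne'
    have h2 := (hSpos (ρ k)).ne'
    field_simp
  -- limit of the increments of ρ^N
  have hsum1 : Tendsto (fun k => ∑ i ∈ Finset.range N, (ρ (k + 1) / ρ k) ^ i) atTop
      (𝓝 (N : ℝ)) := by
    have h := tendsto_finset_sum (Finset.range N) (fun i _ => hr.pow i)
    simpa using h
  have hΔ : Tendsto (fun k => ρ (k + 1) ^ N - ρ k ^ N) atTop (𝓝 ((N : ℝ) * c⁻¹)) := by
    refine (hsum1.mul hL4).congr fun k => ?_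
    have hkne := (hρpos k).ne'
    rw [← geom_sum₂_mul (ρ (k + 1)) (ρ k) N]
    have hsub : ρ (k + 1) - ρ k = 1 / S (ρ k) := by rw [hrec' k]; ring
    rw [hsub, Finset.sum_mul, Finset.sum_mul]
    refine Finset.sum_congr rfl fun i hi => ?_
    have hiN : i < N := Finset.mem_range.mp hi
    have hsplit : ρ k ^ e = ρ k ^ i * ρ k ^ (N - 1 - i) := by
      rw [← pow_add]; congr 1; omega
    have hSne := (hSpos (ρ k)).ne'
    rw [div_pow, hsplit]
    field_simp
  -- Cesàro
  have hces := hΔ.cesaro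
  have h7 : Tendsto (fun k : ℕ => (k : ℝ)⁻¹ * (ρ k ^ N - ρ 0 ^ N)) atTop
      (𝓝 ((N : ℝ) * c⁻¹)) := by
    refine hces.congr fun k => ?_
    rw [Finset.sum_range_sub (fun i => ρ i ^ N)]
  have h8 : Tendsto (fun k : ℕ => (k : ℝ)⁻¹ * ρ 0 ^ N) atTop (𝓝 0) := by
    have := tendsto_inv_atTop_nhds_zero_nat.mul_const (ρ 0 ^ N)
    simpa using this
  have h9 : Tendsto (fun k : ℕ => ρ k ^ N / (k : ℝ)) atTop (𝓝 ((N : ℝ) * c⁻¹)) := by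
    have := h7.add h8
    rw [add_zero] at this
    refine this.congr fun k => by ring
  -- conclude via rpow
  have hNR : (N : ℝ) = 2 ^ (n + 1) - 1 := by
    rw [hN]
    have h1 : (1:ℕ) ≤ 2 ^ (n + 1) := by omega
    push_cast [Nat.cast_sub h1]
    ring
  rw [← hNR, div_eq_mul_inv]
  have hfinal := h9.rpow_const (p := (1 : ℝ) / N) (Or.inr (by positivity))
  refine hfinal.congr' ?_
  filter_upwards [eventually_ge_atTop 1] with k hk
  have hkpos : (0:ℝ) < (k:ℝ) := by exact_mod_cast Nat.succ_le_iff.mp hk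
  rw [Real.div_rpow (pow_nonneg (hρpos k).le N) hkpos.le]
  congr 1
  rw [← Real.rpow_natCast (ρ k) N, ← Real.rpow_mul (hρpos k).le]
  rw [mul_one_div_cancel (Nat.cast_ne_zero.mpr hN0), Real.rpow_one]
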